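/- Let 0 < τ < 1, m ≥ 1, let ρ ∈ C_c^∞(ℝ^m) with ∫_{ℝ^m} ρ dx = 1 and ρ_k(x) = k^m ρ(kx) for k ∈ ℕ, and let u : ℝ^m → ℂ be a bounded function with finite Hölder seminorm [u]_τ = sup_{x ≠ y} |u(x) − u(y)| / |x − y|^τ that moreover satisfies the little-Hölder condition lim_{h→0⁺} sup_{0 < |x − y| ≤ h} |u(x) − u(y)| / |x − y|^τ = 0. Then ρ_k * u → u in the C^τ-norm as k → ∞, i.e. sup_x |(ρ_k * u − u)(x)| + [ρ_k * u − u]_τ → 0. -/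

import Mathlib

open MeasureTheory Filter
open scoped Real Topology

noncomputable section

abbrev Vec (m : ℕ) : Type := EuclideanSpace ℝ (Fin m)

/-- The rescaled mollifier `ρ_k(x) = k^m ρ(kx)`. -/
def mollifier {m : ℕ} (ρ : Vec m → ℝ) (k : ℕ) : Vec m → ℝ :=
  fun x => (k : ℝ) ^ m * ρ ((k : ℝ) • x)

/-- Convolution of a real scalar kernel with a vector-valued function. -/
def convol {m : ℕ} {X : Type*} [NormedAddCommGroup X] [NormedSpace ℝ X]
    (ρ : Vec m → ℝ) (u : Vec m → X) : Vec m → X :=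
  fun x => ∫ y : Vec m, ρ (x - y) • u y

/-- Scaling invariance of the integral under the mollifier rescaling. -/
lemma integral_mollifier_eq {m : ℕ} (f : Vec m → ℝ) (k : ℕ) (hk : 1 ≤ k) :
    ∫ x, mollifier f k x = ∫ x, f x := by
  have hk0 : (0:ℝ) < (k:ℝ) := by exact_mod_cast hk
  have h := MeasureTheory.Measure.integral_comp_smul (μ := (volume : Measure (Vec m))) f (k : ℝ)
  simp only [finrank_euclideanSpace, Fintype.card_fin] at h
  unfold mollifier
  rw [integral_const_mul, h, smul_eq_mul, abs_of_nonneg (by positivity)]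
  field_simp

/-- for a bounded `τ`-Hölder function `u` satisfying the little-Hölder
condition, the mollifications `ρ_k * u` converge to `u` in the `C^τ`-norm. -/
theorem statement13 (τ : ℝ) (hτ0 : 0 < τ) (hτ1 : τ < 1) (m : ℕ) (hm : 1 ≤ m)
    (ρ : Vec m → ℝ) (hρs : ContDiff ℝ (⊤ : ℕ∞) ρ) (hρc : HasCompactSupport ρ)
    (hρ1 : (∫ x : Vec m, ρ x) = 1)
    (u : Vec m → ℂ)
    (Cb : ℝ) (hub : ∀ x, ‖u x‖ ≤ Cb)
    (Ch : ℝ) (huh : ∀ x y : Vec m, ‖u x - u y‖ ≤ Ch * ‖x - y‖ ^ τ)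
    (hlittle : ∀ ε : ℝ, 0 < ε → ∃ δ : ℝ, 0 < δ ∧ ∀ x y : Vec m,
      x ≠ y → ‖x - y‖ ≤ δ → ‖u x - u y‖ ≤ ε * ‖x - y‖ ^ τ) :
    ∀ ε : ℝ, 0 < ε → ∃ K : ℕ, ∀ k : ℕ, K ≤ k → 1 ≤ k →
      (∀ x : Vec m, ‖convol (mollifier ρ k) u x - u x‖ ≤ ε) ∧
      (∀ x y : Vec m,
        ‖(convol (mollifier ρ k) u x - u x) - (convol (mollifier ρ k) u y - u y)‖ ≤
          ε * ‖x - y‖ ^ τ) := by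
  classical
  -- radius of the support of ρ
  obtain ⟨R, hR0, hRsupp⟩ := (hρc.isBounded).subset_closedBall_lt 0 0
  have hsupp : ∀ z : Vec m, ρ z ≠ 0 → ‖z‖ ≤ R := by
    intro z hz
    have : z ∈ tsupport ρ := subset_tsupport ρ hz
    simpa [Metric.mem_closedBall, dist_eq_norm] using hRsupp this
  -- nonnegative Hölder constant
  set C : ℝ := max Ch 0 with hC_def
  have hC0 : 0 ≤ C := le_max_right _ _
  have huh' : ∀ x y : Vec m, ‖u x - u y‖ ≤ C * ‖x - y‖ ^ τ := by
    intro x y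
    exact (huh x y).trans (by
      have := Real.rpow_nonneg (norm_nonneg (x - y)) τ
      nlinarith [le_max_left Ch (0:ℝ)])
  -- continuity of u
  have hu_cont : Continuous u := by
    rw [Metric.continuous_iff]
    intro x ε hε
    set δ := (ε / (2 * (C + 1))) ^ τ⁻¹ with hδdef
    have hq : (0:ℝ) < ε / (2 * (C + 1)) := by positivity
    have hδ0 : 0 < δ := Real.rpow_pos_of_pos hq _
    refine ⟨δ, hδ0, fun y hy => ?_⟩
    have h1 : ‖y - x‖ ^ τ ≤ δ ^ τ := by
      apply Real.rpow_le_rpow (norm_nonneg _) _ hτ0.le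
      rw [dist_eq_norm] at hy; exact hy.le
    have h2 : δ ^ τ = ε / (2 * (C + 1)) := Real.rpow_inv_rpow hq.le hτ0.ne'
    calc dist (u y) (u x) = ‖u y - u x‖ := dist_eq_norm _ _
      _ ≤ C * ‖y - x‖ ^ τ := huh' y x
      _ ≤ C * δ ^ τ := by gcongr
      _ = C * (ε / (2 * (C + 1))) := by rw [h2]
      _ ≤ (C + 1) * (ε / (2 * (C + 1))) := by gcongr; linarith
      _ = ε / 2 := by field_simp
      _ < ε := by linarith
  -- integrability of ρ and the basic constants
  have hρcont : Continuous ρ := hρs.continuous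
  have hint_ρ : Integrable ρ := hρcont.integrable_of_hasCompactSupport hρc
  set I : ℝ := ∫ z : Vec m, ‖ρ z‖ with hI_def
  have hI0 : 0 ≤ I := integral_nonneg fun z => norm_nonneg _
  -- facts about the mollifier, for each k ≥ 1
  have hκ0 : ∀ k : ℕ, 1 ≤ k → (0:ℝ) < (k:ℝ) := fun k hk => by exact_mod_cast hk
  have hmoll_cont : ∀ k : ℕ, Continuous (mollifier ρ k) := by
    intro k; unfold mollifier; fun_prop
  have hmoll_supp : ∀ k : ℕ, 1 ≤ k → ∀ z : Vec m, mollifier ρ k z ≠ 0 → ‖z‖ ≤ R / k := by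
    intro k hk z hz
    have hρz : ρ ((k:ℝ) • z) ≠ 0 := by
      intro h0; apply hz; unfold mollifier; rw [h0, mul_zero]
    have := hsupp _ hρz
    rw [norm_smul] at this
    rw [le_div_iff₀ (hκ0 k hk)]
    simpa [abs_of_pos (hκ0 k hk), mul_comm] using this
  have hmoll_cs : ∀ k : ℕ, 1 ≤ k → HasCompactSupport (mollifier ρ k) := by
    intro k hk
    apply HasCompactSupport.intro (isCompact_closedBall (0 : Vec m) (R / k))
    intro z hz
    by_contra h
    exact hz (by simpa [Metric.mem_closedBall, dist_eq_norm] using hmoll_supp k hk z h)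
  have hmoll_int : ∀ k : ℕ, 1 ≤ k → Integrable (mollifier ρ k) := fun k hk =>
    (hmoll_cont k).integrable_of_hasCompactSupport (hmoll_cs k hk)
  have hmoll_int1 : ∀ k : ℕ, 1 ≤ k → (∫ z : Vec m, mollifier ρ k z) = 1 := fun k hk => by
    rw [integral_mollifier_eq ρ k hk, hρ1]
  have hmoll_norm : ∀ k : ℕ, 1 ≤ k → (∫ z : Vec m, ‖mollifier ρ k z‖) = I := by
    intro k hk
    have heq : ∀ z : Vec m, ‖mollifier ρ k z‖ = mollifier (fun w => ‖ρ w‖) k z := by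
      intro z
      unfold mollifier
      rw [Real.norm_eq_abs, abs_mul, abs_of_nonneg (by positivity)]
      rfl
    rw [hI_def]
    simp_rw [heq]
    exact integral_mollifier_eq (fun w => ‖ρ w‖) k hk
  -- integrability of the convolution integrand
  have hint1 : ∀ (k : ℕ), 1 ≤ k → ∀ x : Vec m,
      Integrable (fun z : Vec m => mollifier ρ k z • u (x - z)) := by
    intro k hk x
    have hc : Continuous (fun z : Vec m => mollifier ρ k z • u (x - z)) :=
      (hmoll_cont k).smul (hu_cont.comp (continuous_const.sub continuous_id))
    refine hc.integrable_of_hasCompactSupport ?_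
    exact (hmoll_cs k hk).smul_right
  have hintd : ∀ (k : ℕ), 1 ≤ k → ∀ x : Vec m,
      Integrable (fun z : Vec m => mollifier ρ k z • (u (x - z) - u x)) := by
    intro k hk x
    simp_rw [smul_sub]
    exact (hint1 k hk x).sub ((hmoll_int k hk).smul_const (u x))
  -- the key representation
  have key : ∀ (k : ℕ), 1 ≤ k → ∀ x : Vec m,
      convol (mollifier ρ k) u x - u x = ∫ z : Vec m, mollifier ρ k z • (u (x - z) - u x) := by
    intro k hk x
    have h1 : convol (mollifier ρ k) u x = ∫ z : Vec m, mollifier ρ k z • u (x - z) := by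
      unfold convol
      have := integral_sub_left_eq_self (fun y : Vec m => mollifier ρ k (x - y) • u y)
        (volume : Measure (Vec m)) x
      simpa using this.symm
    calc convol (mollifier ρ k) u x - u x
        = (∫ z : Vec m, mollifier ρ k z • u (x - z)) - ∫ z : Vec m, mollifier ρ k z • u x := by
          rw [h1, integral_smul_const, hmoll_int1 k hk, one_smul]
      _ = ∫ z : Vec m, (mollifier ρ k z • u (x - z) - mollifier ρ k z • u x) :=
          (integral_sub (hint1 k hk x) ((hmoll_int k hk).smul_const (u x))).symm
      _ = ∫ z : Vec m, mollifier ρ k z • (u (x - z) - u x) := by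
          simp [smul_sub]
  -- the generic bound
  have hbound : ∀ (k : ℕ), 1 ≤ k → ∀ (w : Vec m → ℂ) (M : ℝ), 0 ≤ M →
      (∀ z : Vec m, ‖z‖ ≤ R / k → ‖w z‖ ≤ M) →
      ‖∫ z : Vec m, mollifier ρ k z • w z‖ ≤ M * I := by
    intro k hk w M hM hw
    have h1 : ‖∫ z : Vec m, mollifier ρ k z • w z‖ ≤ ∫ z : Vec m, ‖mollifier ρ k z‖ * M := by
      apply norm_integral_le_of_norm_le ((hmoll_int k hk).norm.mul_const M)
      filter_upwards with z
      rw [norm_smul]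
      by_cases hz : mollifier ρ k z = 0
      · simp [hz]
      · exact mul_le_mul_of_nonneg_left (hw z (hmoll_supp k hk z hz)) (norm_nonneg _)
    rw [integral_mul_const, hmoll_norm k hk] at h1
    linarith [h1]
  -- the sup bound, quantitative in k
  have hsup : ∀ (k : ℕ), 1 ≤ k → ∀ x : Vec m,
      ‖convol (mollifier ρ k) u x - u x‖ ≤ C * I * (R / k) ^ τ := by
    intro k hk x
    rw [key k hk x]
    have hRk : (0:ℝ) ≤ R / k := by positivity
    have hM : (0:ℝ) ≤ C * (R / k) ^ τ := by
      have := Real.rpow_nonneg hRk τ; positivity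
    have h := hbound k hk (fun z => u (x - z) - u x) (C * (R / k) ^ τ) hM ?_
    · calc ‖∫ z : Vec m, mollifier ρ k z • (u (x - z) - u x)‖
          ≤ (C * (R / k) ^ τ) * I := h
        _ = C * I * (R / k) ^ τ := by ring
    · intro z hz
      calc ‖u (x - z) - u x‖ ≤ C * ‖(x - z) - x‖ ^ τ := huh' _ _
        _ = C * ‖z‖ ^ τ := by rw [show (x - z) - x = -z by abel, norm_neg]
        _ ≤ C * (R / k) ^ τ := by
            apply mul_le_mul_of_nonneg_left _ hC0
            exact Real.rpow_le_rpow (norm_nonneg _) hz hτ0.le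
  -- now the main argument
  intro ε hε
  obtain ⟨δ, hδ0, hδ⟩ := hlittle (ε / (2 * I + 2)) (by positivity)
  have hδτ : (0:ℝ) < δ ^ τ := Real.rpow_pos_of_pos hδ0 _
  set c : ℝ := min ε (ε * δ ^ τ / 2) with hc_def
  have hc0 : 0 < c := lt_min hε (by positivity)
  -- eventually C * I * (R/k)^τ < c
  have htend : Tendsto (fun k : ℕ => C * I * (R / (k:ℝ)) ^ τ) atTop (𝓝 0) := by
    have h0 : Tendsto (fun k : ℕ => R / (k:ℝ)) atTop (𝓝 0) :=
      tendsto_const_div_atTop_nhds_zero_nat R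
    have h1 : Tendsto (fun k : ℕ => (R / (k:ℝ)) ^ τ) atTop (𝓝 0) := by
      have h2 := (Real.continuousAt_rpow_const 0 τ (Or.inr hτ0.le)).tendsto.comp h0
      simpa [Function.comp_def, Real.zero_rpow hτ0.ne'] using h2
    have := h1.const_mul (C * I)
    simpa using this
  obtain ⟨K, hK⟩ := eventually_atTop.1 (htend.eventually_lt_const hc0)
  refine ⟨K, fun k hkK hk1 => ?_⟩
  have hklt : C * I * (R / (k:ℝ)) ^ τ < c := hK k hkK
  have hc_le1 : c ≤ ε := min_le_left _ _
  have hc_le2 : c ≤ ε * δ ^ τ / 2 := min_le_right _ _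
  constructor
  · -- sup bound
    intro x
    exact (hsup k hk1 x).trans (hklt.le.trans hc_le1)
  · -- Hölder seminorm bound
    intro x y
    by_cases hxy : x = y
    · subst hxy
      simp [sub_self, Real.zero_rpow hτ0.ne']
    have hgd : (convol (mollifier ρ k) u x - u x) - (convol (mollifier ρ k) u y - u y)
        = ∫ z : Vec m, mollifier ρ k z • ((u (x - z) - u x) - (u (y - z) - u y)) := by
      rw [key k hk1 x, key k hk1 y, ← integral_sub (hintd k hk1 x) (hintd k hk1 y)]
      congr 1 with z
      simp [smul_sub]
    by_cases hsmall : ‖x - y‖ ≤ δ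
    · -- small distance: use the little-Hölder estimate, uniformly in k
      rw [hgd]
      set ε' : ℝ := ε / (2 * I + 2) with hε'def
      have hε'0 : 0 < ε' := by positivity
      have hxyτ : (0:ℝ) ≤ ‖x - y‖ ^ τ := Real.rpow_nonneg (norm_nonneg _) _
      have h := hbound k hk1 (fun z => (u (x - z) - u x) - (u (y - z) - u y))
        (2 * ε' * ‖x - y‖ ^ τ) (by positivity) ?_
      · calc ‖∫ z : Vec m, mollifier ρ k z • ((u (x - z) - u x) - (u (y - z) - u y))‖
            ≤ (2 * ε' * ‖x - y‖ ^ τ) * I := h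
          _ ≤ ε * ‖x - y‖ ^ τ := by
              have key2 : 2 * ε' * I ≤ ε := by
                have h2I : (0:ℝ) < 2 * I + 2 := by positivity
                rw [hε'def, show 2 * (ε / (2 * I + 2)) * I = ε * (2 * I) / (2 * I + 2) by ring,
                  div_le_iff₀ h2I]
                nlinarith
              nlinarith
      · intro z _
        have hne : x - z ≠ y - z := fun h => hxy (by
          have := congrArg (fun w => w + z) h
          simpa using this)
        have hd : ‖(x - z) - (y - z)‖ = ‖x - y‖ := by
          congr 1; abel
        have h1 : ‖u (x - z) - u (y - z)‖ ≤ ε' * ‖x - y‖ ^ τ := by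
          have := hδ (x - z) (y - z) hne (by rw [hd]; exact hsmall)
          rwa [hd] at this
        have h2 : ‖u x - u y‖ ≤ ε' * ‖x - y‖ ^ τ := hδ x y hxy hsmall
        calc ‖(u (x - z) - u x) - (u (y - z) - u y)‖
            = ‖(u (x - z) - u (y - z)) - (u x - u y)‖ := by congr 1; ring
          _ ≤ ‖u (x - z) - u (y - z)‖ + ‖u x - u y‖ := norm_sub_le _ _
          _ ≤ ε' * ‖x - y‖ ^ τ + ε' * ‖x - y‖ ^ τ := add_le_add h1 h2
          _ = 2 * ε' * ‖x - y‖ ^ τ := by ring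
    · -- large distance: use the sup bound
      push_neg at hsmall
      have hδxy : δ ^ τ ≤ ‖x - y‖ ^ τ :=
        Real.rpow_le_rpow hδ0.le hsmall.le hτ0.le
      calc ‖(convol (mollifier ρ k) u x - u x) - (convol (mollifier ρ k) u y - u y)‖
          ≤ ‖convol (mollifier ρ k) u x - u x‖ + ‖convol (mollifier ρ k) u y - u y‖ :=
            norm_sub_le _ _
        _ ≤ C * I * (R / k) ^ τ + C * I * (R / k) ^ τ :=
            add_le_add (hsup k hk1 x) (hsup k hk1 y)
        _ ≤ c + c := add_le_add hklt.le hklt.le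
        _ ≤ ε * δ ^ τ := by linarith
        _ ≤ ε * ‖x - y‖ ^ τ := by gcongr
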